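/- arXiv:1705.07806 — 3 statements merged into one kernel-verified Lean document; each statement's English description precedes it below -/
import Mathlib

section
/- Let V₁,…,V_J be finite-dimensional inner product spaces with linear maps Π_j : V_j → V such that V = Σ_j Π_j V_j. Let A_j be symmetric positive semidefinite on V_j, D_j SPD on V_j, and V_j^c ⊂ V_j subspaces with N(A_j) ⊂ V_j^c. Let Q_j : V_j → V_j^c be the D_j-orthogonal projection and define μ_j^{-1} = max_{v_j∈V_j} min_{v_j^c∈V_j^c} ‖v_j − v_j^c‖²_{D_j}/‖v_j‖²_{A_j} and μ_c = min_j μ_j. Assume: (1) ‖Σ_j Π_j w_j‖²_D ≤ C_{p,2} Σ_j ‖w_j‖²_{D_j} for all (w_j); (2) every w ∈ V admits a decomposition w = Σ_j Π_j w_j with Σ_j ‖w_j‖²_{A_j} ≤ C_{p,1} ‖w‖²_A. Then for the coarse space V_c = Σ_j Π_j V_j^c, every v ∈ V satisfies min_{v_c∈V_c} ‖v − v_c‖²_D ≤ C_{p,1} C_{p,2} μ_c^{-1} ‖v‖²_A. -/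
open Finset Matrix

/-- Abstract local-to-global coarse space construction. Given auxiliary
spaces `V_j = ℝ^{m j}` with transfer maps `Π_j`, local PSD operators `A_j`, local SPD
operators `D_j`, local coarse spaces `V_j^c ⊇ N(A_j)` with uniform local approximation
constant `μ_c`, a `D`-stability bound `C_{p,2}` for `Π`, and a stable decomposition
with constant `C_{p,1}`, the global coarse space `V_c = Σ_j Π_j V_j^c` satisfies
`min_{v_c ∈ V_c} ‖v - v_c‖²_D ≤ C_{p,1} C_{p,2} μ_c⁻¹ ‖v‖²_A` for all `v`. -/
theorem local_to_global_coarse_space (n J : ℕ) (m : Fin J → ℕ)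
    (A D : Matrix (Fin n) (Fin n) ℝ) (hA : A.PosDef) (hD : D.PosDef)
    (Aj Dj : ∀ j : Fin J, Matrix (Fin (m j)) (Fin (m j)) ℝ)
    (hAj : ∀ j, (Aj j).PosSemidef) (hDj : ∀ j, (Dj j).PosDef)
    (Pimap : ∀ j : Fin J, (Fin (m j) → ℝ) →ₗ[ℝ] (Fin n → ℝ))
    (Vjc : ∀ j : Fin J, Submodule ℝ (Fin (m j) → ℝ))
    (hker : ∀ j (v : Fin (m j) → ℝ), (Aj j).mulVec v = 0 → v ∈ Vjc j)
    (μc C1 C2 : ℝ) (hμc : 0 < μc) (hC1 : 0 ≤ C1) (hC2 : 0 ≤ C2)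
    (happrox : ∀ j (v : Fin (m j) → ℝ), ∃ vc ∈ Vjc j,
      (v - vc) ⬝ᵥ (Dj j).mulVec (v - vc) ≤ μc⁻¹ * (v ⬝ᵥ (Aj j).mulVec v))
    (hC2stab : ∀ w : (j : Fin J) → (Fin (m j) → ℝ),
      (∑ j, Pimap j (w j)) ⬝ᵥ D.mulVec (∑ j, Pimap j (w j)) ≤
        C2 * ∑ j, (w j) ⬝ᵥ (Dj j).mulVec (w j))
    (hC1dec : ∀ v : Fin n → ℝ, ∃ w : (j : Fin J) → (Fin (m j) → ℝ),
      v = (∑ j, Pimap j (w j)) ∧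
      (∑ j, (w j) ⬝ᵥ (Aj j).mulVec (w j)) ≤ C1 * (v ⬝ᵥ A.mulVec v)) :
    ∀ v : Fin n → ℝ, ∃ vc ∈ (⨆ j, (Vjc j).map (Pimap j)),
      (v - vc) ⬝ᵥ D.mulVec (v - vc) ≤ C1 * C2 * μc⁻¹ * (v ⬝ᵥ A.mulVec v) := by
  intro v
  obtain ⟨w, hw, hwA⟩ := hC1dec v
  choose wc hwc hwcd using fun j => happrox j (w j)
  refine ⟨∑ j, Pimap j (wc j), ?_, ?_⟩
  · exact Submodule.sum_mem _ fun j _ =>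
      (le_iSup (fun j => (Vjc j).map (Pimap j)) j)
        (Submodule.mem_map_of_mem (hwc j))
  · have h1 : v - ∑ j, Pimap j (wc j) = ∑ j, Pimap j (w j - wc j) := by
      rw [hw]
      rw [← Finset.sum_sub_distrib]
      congr 1
      ext j
      rw [map_sub]
    rw [h1]
    calc (∑ j, Pimap j (w j - wc j)) ⬝ᵥ D.mulVec (∑ j, Pimap j (w j - wc j))
        ≤ C2 * ∑ j, (w j - wc j) ⬝ᵥ (Dj j).mulVec (w j - wc j) :=
          hC2stab (fun j => w j - wc j)
      _ ≤ C2 * ∑ j, μc⁻¹ * ((w j) ⬝ᵥ (Aj j).mulVec (w j)) := by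
          apply mul_le_mul_of_nonneg_left _ hC2
          exact Finset.sum_le_sum fun j _ => hwcd j
      _ = C2 * μc⁻¹ * ∑ j, (w j) ⬝ᵥ (Aj j).mulVec (w j) := by
          rw [← Finset.mul_sum, mul_assoc]
      _ ≤ C2 * μc⁻¹ * (C1 * (v ⬝ᵥ A.mulVec v)) := by
          apply mul_le_mul_of_nonneg_left hwA
          positivity
      _ = C1 * C2 * μc⁻¹ * (v ⬝ᵥ A.mulVec v) := by ring
end

section
/- Under the assumptions of the previous statement plus the smoother bounds ‖v‖²_A ≤ ‖v‖²_{R̄^{-1}} ≤ c^D ‖v‖²_D, the two-level method with exact coarse solve on V_c = Σ_j Π_j V_j^c has convergence rate ‖E‖²_A ≤ 1 − μ_c/(C_{p,1} C_{p,2} c^D). -/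
open Finset Matrix

/-- Under the assumptions of the local-to-global coarse space theorem,
together with the smoother bounds `‖v‖²_A ≤ ‖v‖²_{R̄⁻¹} ≤ c^D ‖v‖²_D` and the
two-level identity `‖E‖²_A = 1 - 1/K(V_c)` (with `K(V_c)` the least constant in the
`R̄⁻¹`-approximation inequality for `V_c = Σ_j Π_j V_j^c`), the two-level method
converges with rate `‖E‖²_A ≤ 1 - μ_c/(C_{p,1} C_{p,2} c^D)`. -/
theorem two_level_convergence_rate (n J : ℕ) (m : Fin J → ℕ)
    (A D : Matrix (Fin n) (Fin n) ℝ) (hA : A.PosDef) (hD : D.PosDef)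
    (Aj Dj : ∀ j : Fin J, Matrix (Fin (m j)) (Fin (m j)) ℝ)
    (hAj : ∀ j, (Aj j).PosSemidef) (hDj : ∀ j, (Dj j).PosDef)
    (Pimap : ∀ j : Fin J, (Fin (m j) → ℝ) →ₗ[ℝ] (Fin n → ℝ))
    (Vjc : ∀ j : Fin J, Submodule ℝ (Fin (m j) → ℝ))
    (hker : ∀ j (v : Fin (m j) → ℝ), (Aj j).mulVec v = 0 → v ∈ Vjc j)
    (μc C1 C2 : ℝ) (hμc : 0 < μc) (hC1 : 0 < C1) (hC2 : 0 < C2)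
    (happrox : ∀ j (v : Fin (m j) → ℝ), ∃ vc ∈ Vjc j,
      (v - vc) ⬝ᵥ (Dj j).mulVec (v - vc) ≤ μc⁻¹ * (v ⬝ᵥ (Aj j).mulVec v))
    (hC2stab : ∀ w : (j : Fin J) → (Fin (m j) → ℝ),
      (∑ j, Pimap j (w j)) ⬝ᵥ D.mulVec (∑ j, Pimap j (w j)) ≤
        C2 * ∑ j, (w j) ⬝ᵥ (Dj j).mulVec (w j))
    (hC1dec : ∀ v : Fin n → ℝ, ∃ w : (j : Fin J) → (Fin (m j) → ℝ),
      v = (∑ j, Pimap j (w j)) ∧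
      (∑ j, (w j) ⬝ᵥ (Aj j).mulVec (w j)) ≤ C1 * (v ⬝ᵥ A.mulVec v))
    (qR : (Fin n → ℝ) → ℝ)  -- v ↦ ‖v‖²_{R̄⁻¹}
    (cD : ℝ) (hcD : 0 < cD)
    (hR : ∀ v, v ⬝ᵥ A.mulVec v ≤ qR v ∧ qR v ≤ cD * (v ⬝ᵥ D.mulVec v))
    (K Esq : ℝ) (hKpos : 0 < K)
    (hK : IsLeast {C : ℝ | ∀ v : Fin n → ℝ, ∃ vc ∈ (⨆ j, (Vjc j).map (Pimap j)),
      qR (v - vc) ≤ C * (v ⬝ᵥ A.mulVec v)} K)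
    (hE : Esq = 1 - 1 / K) :
    Esq ≤ 1 - μc / (C1 * C2 * cD) := by

  classical
  set C : ℝ := C1 * C2 * cD / μc with hCdef
  have hCpos : 0 < C := by positivity
  have hmem : C ∈ {C : ℝ | ∀ v : Fin n → ℝ, ∃ vc ∈ (⨆ j, (Vjc j).map (Pimap j)),
      qR (v - vc) ≤ C * (v ⬝ᵥ A.mulVec v)} := by
    intro v
    obtain ⟨w, hw, hwA⟩ := hC1dec v
    choose wc hwc hwcD using fun j => happrox j (w j)
    refine ⟨∑ j, Pimap j (wc j), ?_, ?_⟩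
    · exact Submodule.sum_mem _ (fun j _ =>
        Submodule.mem_iSup_of_mem j (Submodule.mem_map_of_mem (hwc j)))
    · have hdiff : v - ∑ j, Pimap j (wc j) = ∑ j, Pimap j (w j - wc j) := by
        rw [hw, ← Finset.sum_sub_distrib]
        exact Finset.sum_congr rfl (fun j _ => by rw [map_sub])
      have h1 := (hR (v - ∑ j, Pimap j (wc j))).2
      have h2 : (v - ∑ j, Pimap j (wc j)) ⬝ᵥ D.mulVec (v - ∑ j, Pimap j (wc j)) ≤
          C2 * ∑ j, (w j - wc j) ⬝ᵥ (Dj j).mulVec (w j - wc j) := by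
        rw [hdiff]; exact hC2stab (fun j => w j - wc j)
      have h3 : ∑ j, (w j - wc j) ⬝ᵥ (Dj j).mulVec (w j - wc j) ≤
          μc⁻¹ * ∑ j, (w j) ⬝ᵥ (Aj j).mulVec (w j) := by
        rw [Finset.mul_sum]
        exact Finset.sum_le_sum (fun j _ => hwcD j)
      have h4 : μc⁻¹ * ∑ j, (w j) ⬝ᵥ (Aj j).mulVec (w j) ≤
          μc⁻¹ * (C1 * (v ⬝ᵥ A.mulVec v)) :=
        mul_le_mul_of_nonneg_left hwA (by positivity)
      calc qR (v - ∑ j, Pimap j (wc j))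
          ≤ cD * ((v - ∑ j, Pimap j (wc j)) ⬝ᵥ D.mulVec (v - ∑ j, Pimap j (wc j))) := h1
        _ ≤ cD * (C2 * ∑ j, (w j - wc j) ⬝ᵥ (Dj j).mulVec (w j - wc j)) :=
            mul_le_mul_of_nonneg_left h2 (le_of_lt hcD)
        _ ≤ cD * (C2 * (μc⁻¹ * ∑ j, (w j) ⬝ᵥ (Aj j).mulVec (w j))) := by
            apply mul_le_mul_of_nonneg_left _ (le_of_lt hcD)
            exact mul_le_mul_of_nonneg_left h3 (le_of_lt hC2)
        _ ≤ cD * (C2 * (μc⁻¹ * (C1 * (v ⬝ᵥ A.mulVec v)))) := by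
            apply mul_le_mul_of_nonneg_left _ (le_of_lt hcD)
            exact mul_le_mul_of_nonneg_left h4 (le_of_lt hC2)
        _ = C * (v ⬝ᵥ A.mulVec v) := by rw [hCdef]; field_simp
  have hKC : K ≤ C := hK.2 hmem
  have hinv : 1 / C ≤ 1 / K := one_div_le_one_div_of_le hKpos hKC
  have hCinv : 1 / C = μc / (C1 * C2 * cD) := by rw [hCdef, one_div_div]
  rw [hE]
  linarith [hCinv ▸ hinv]
end

section
/- Let A be a symmetric M-matrix on ℝ^n written as (Au,v) = Σ_{e=(i,j)∈E} ω_e (u_i−u_j)(v_i−v_j) with all ω_e = −a_{ij} > 0. For a threshold θ ∈ (0,1) define the strength function s_c(i,j) = a_{ij}/max(min_{k≠i} a_{ik}, min_{k≠j} a_{jk}) and the filtered matrix (A_S u, v) = Σ_{e=(i,j): s_c(i,j) ≥ θ} ω_e (u_i−u_j)(v_i−v_j). Let D, D_S denote the diagonals of A, A_S, and N_i the neighbors of i. Then ‖v‖²_{A_S} ≤ ‖v‖²_A for all v, and ‖v‖²_D ≤ (max_i |N_i|/θ) ‖v‖²_{D_S} for all v; in particular A_S is an M-matrix relative of A. -/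
open Finset Matrix

/-- For a symmetric M-matrix `A` of graph Laplacian type (negative
off-diagonal entries on edges, zero row sums) and a strength threshold `θ ∈ (0,1)`,
the filtered matrix `A_S` (keeping edges with `s_c(i,j) ≥ θ`) satisfies
`‖v‖²_{A_S} ≤ ‖v‖²_A` and `‖v‖²_D ≤ (max_i |N_i|/θ) ‖v‖²_{D_S}`; in particular
`A_S` is an M-matrix relative of `A`. -/
theorem strength_filtered_m_matrix_relative (n : ℕ) (hn : 2 ≤ n)
    (A : Matrix (Fin n) (Fin n) ℝ) (hsym : A.IsSymm)
    (hoff : ∀ i j, i ≠ j → A i j ≤ 0)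
    (hdiag : ∀ i, A i i = ∑ j ∈ Finset.univ.erase i, (-(A i j)))
    (θ : ℝ) (hθ : θ ∈ Set.Ioo (0:ℝ) 1)
    (Nb : Fin n → Finset (Fin n))
    (hNb : ∀ i, Nb i = (Finset.univ.erase i).filter fun j => A i j ≠ 0)
    (minRow : Fin n → ℝ)
    (hminRow : ∀ i, minRow i = ((Finset.univ.erase i).image fun k => A i k).min'
      (Finset.Nonempty.image (by
        rw [← Finset.card_pos, Finset.card_erase_of_mem (Finset.mem_univ i),
          Finset.card_univ, Fintype.card_fin]
        omega) _))
    (sc : Fin n → Fin n → ℝ)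
    (hsc : ∀ i j, sc i j = A i j / max (minRow i) (minRow j))
    (maxN : ℕ) (hmaxN : maxN = Finset.univ.sup fun i => (Nb i).card) :
    (∀ v : Fin n → ℝ,
      (1/2) * (∑ i, ∑ j ∈ Finset.univ.filter (fun j => j ≠ i ∧ θ ≤ sc i j),
          (-(A i j)) * (v i - v j) ^ 2) ≤
        (1/2) * ∑ i, ∑ j ∈ Finset.univ.erase i, (-(A i j)) * (v i - v j) ^ 2) ∧
    (∀ v : Fin n → ℝ,
      (∑ i, A i i * (v i) ^ 2) ≤
        ((maxN : ℝ) / θ) * ∑ i,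
          (∑ j ∈ Finset.univ.filter (fun j => j ≠ i ∧ θ ≤ sc i j), (-(A i j))) *
            (v i) ^ 2) := by
  obtain ⟨hθ0, hθ1⟩ := hθ
  -- general facts
  have hm_le : ∀ p q : Fin n, q ≠ p → minRow p ≤ A p q := by
    intro p q hqp
    rw [hminRow]
    exact Finset.min'_le _ _ (Finset.mem_image.2 ⟨q, Finset.mem_erase.2 ⟨hqp, Finset.mem_univ q⟩, rfl⟩)
  have hm_mem : ∀ p : Fin n, ∃ k, k ≠ p ∧ A p k = minRow p := by
    intro p
    have := Finset.min'_mem ((Finset.univ.erase p).image fun k => A p k)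
      (Finset.Nonempty.image (by
        rw [← Finset.card_pos, Finset.card_erase_of_mem (Finset.mem_univ p),
          Finset.card_univ, Fintype.card_fin]
        omega) _)
    rw [← hminRow p, Finset.mem_image] at this
    obtain ⟨k, hk, hAk⟩ := this
    exact ⟨k, (Finset.mem_erase.1 hk).1, hAk⟩
  have hm0 : ∀ p : Fin n, minRow p ≤ 0 := by
    intro p
    obtain ⟨k, hk, hAk⟩ := hm_mem p
    rw [← hAk]
    exact hoff p k (Ne.symm hk)
  constructor
  · intro v
    apply mul_le_mul_of_nonneg_left _ (by norm_num)
    apply Finset.sum_le_sum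
    intro i _
    apply Finset.sum_le_sum_of_subset_of_nonneg
    · intro j hj
      simp only [Finset.mem_filter, Finset.mem_univ, true_and] at hj
      exact Finset.mem_erase.2 ⟨hj.1, Finset.mem_univ j⟩
    · intro j hj _
      have h1 : A i j ≤ 0 := hoff i j (Ne.symm (Finset.ne_of_mem_erase hj))
      exact mul_nonneg (by linarith) (sq_nonneg _)
  · intro v
    rw [Finset.mul_sum]
    apply Finset.sum_le_sum
    intro i _
    rw [← mul_assoc]
    apply mul_le_mul_of_nonneg_right _ (sq_nonneg _)
    set S := ∑ j ∈ Finset.univ.filter (fun j => j ≠ i ∧ θ ≤ sc i j), (-(A i j)) with hSdef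
    have hS0 : 0 ≤ S := by
      apply Finset.sum_nonneg
      intro j hj
      simp only [Finset.mem_filter, Finset.mem_univ, true_and] at hj
      have := hoff i j (Ne.symm hj.1)
      linarith
    have hC0 : (0:ℝ) ≤ (maxN : ℝ) := Nat.cast_nonneg _
    rcases eq_or_lt_of_le (hm0 i) with hm | hm
    · -- minRow i = 0 : all off-diagonal entries vanish
      have hAzero : ∀ j, j ≠ i → A i j = 0 := by
        intro j hj
        have h1 := hm_le i j hj
        have h2 := hoff i j (Ne.symm hj)
        linarith [hm ▸ h1]
      have : A i i = 0 := by
        rw [hdiag i]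
        apply Finset.sum_eq_zero
        intro j hj
        rw [hAzero j (Finset.ne_of_mem_erase hj)]
        ring
      rw [this]
      exact mul_nonneg (div_nonneg hC0 hθ0.le) hS0
    · -- minRow i < 0
      obtain ⟨k, hk_ne, hAk⟩ := hm_mem i
      have hAki : A k i = A i k := by
        have := hsym
        rw [Matrix.IsSymm] at this
        calc A k i = A.transpose i k := rfl
          _ = A i k := by rw [this]
      have hmk : minRow k < 0 := by
        have h1 := hm_le k i (Ne.symm hk_ne)
        rw [hAki, hAk] at h1
        linarith
      have hmax : max (minRow i) (minRow k) < 0 := max_lt hm hmk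
      have hsck : θ ≤ sc i k := by
        rw [hsc, le_div_iff_of_neg hmax, hAk]
        have h1 : minRow i ≤ max (minRow i) (minRow k) := le_max_left _ _
        nlinarith [mul_nonneg (by linarith : (0:ℝ) ≤ 1 - θ)
          (by linarith : (0:ℝ) ≤ -(max (minRow i) (minRow k)))]
      have hkmem : k ∈ Finset.univ.filter (fun j => j ≠ i ∧ θ ≤ sc i j) :=
        Finset.mem_filter.2 ⟨Finset.mem_univ k, hk_ne, hsck⟩
      have hSk : -(minRow i) ≤ S := by
        rw [← hAk]
        apply Finset.single_le_sum _ hkmem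
        intro j hj
        simp only [Finset.mem_filter, Finset.mem_univ, true_and] at hj
        have := hoff i j (Ne.symm hj.1)
        linarith
      -- bound the diagonal
      have hsum_nb : A i i = ∑ j ∈ Nb i, (-(A i j)) := by
        rw [hdiag i, hNb i]
        rw [Finset.sum_filter_of_ne]
        intro j _ hj
        simpa using hj
      have hcard : A i i ≤ ((Nb i).card : ℝ) * (-(minRow i)) := by
        rw [hsum_nb]
        have := Finset.sum_le_card_nsmul (Nb i) (fun j => -(A i j)) (-(minRow i)) ?bd
        · simpa [nsmul_eq_mul] using this
        case bd =>
          intro j hj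
          rw [hNb i] at hj
          have hji := Finset.ne_of_mem_erase (Finset.mem_filter.1 hj).1
          have := hm_le i j hji
          show -A i j ≤ -minRow i
          linarith
      have hcard_le : ((Nb i).card : ℝ) ≤ (maxN : ℝ) := by
        rw [hmaxN]
        exact_mod_cast Finset.le_sup (f := fun i => (Nb i).card) (Finset.mem_univ i)
      have h2 : A i i ≤ (maxN : ℝ) * S := by
        have hmi : 0 ≤ -(minRow i) := by linarith
        nlinarith
      have h3 : (maxN : ℝ) * S ≤ (maxN : ℝ) / θ * S := by
        rw [div_mul_eq_mul_div, le_div_iff₀ hθ0]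
        nlinarith [mul_nonneg hC0 hS0]
      linarith
end
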